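/- arXiv:2106.12217 — 2 statements merged into one kernel-verified Lean document; each statement's English description precedes it below -/
import Mathlib

section
/- Let f : ℝ → ℝ be C¹ with f(x) > ε > 0, f and f' bounded, Λ(x) = ∫₀ˣ 1/f, Λ⁻¹ its inverse. Define u(t,x) := (f(Λ⁻¹(Λ(x) − t))/f(x)) · exp(−((Λ⁻¹(Λ(x) − t))² − x²)/(2T)) for t ∈ [0,T]. Then u(0,x) = 1 for all x, and u satisfies the PDE ∂ₜu = −∂ₓ(f(x)·u) + f(x)·u·x/T on (0,T] × ℝ. -/
open MeasureTheory

theorem u_solves_pde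
    (f : ℝ → ℝ) (ε : ℝ) (hε : 0 < ε) (hf : ContDiff ℝ 1 f)
    (hfb : ∃ C, ∀ x, |f x| ≤ C) (hf'b : ∃ C, ∀ x, |deriv f x| ≤ C)
    (hfε : ∀ x, ε < f x)
    (Λ Linv : ℝ → ℝ) (hΛ : ∀ x, Λ x = ∫ t in (0:ℝ)..x, 1 / f t)
    (hLinv : Function.LeftInverse Linv Λ) (hRinv : Function.RightInverse Linv Λ)
    (T : ℝ) (hT : 0 < T)
    (u : ℝ → ℝ → ℝ)
    (hu : ∀ t x, u t x = (f (Linv (Λ x - t)) / f x) *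
        Real.exp (-((Linv (Λ x - t)) ^ 2 - x ^ 2) / (2 * T))) :
    (∀ x, u 0 x = 1) ∧
      ∀ t ∈ Set.Ioc (0:ℝ) T, ∀ x : ℝ,
        deriv (fun s => u s x) t =
          -(deriv (fun y => f y * u t y) x) + f x * u t x * x / T := by
  have hfpos : ∀ x, 0 < f x := fun x => hε.trans (hfε x)
  have hfne : ∀ x, f x ≠ 0 := fun x => (hfpos x).ne'
  have hfc : Continuous f := hf.continuous
  have hic : Continuous fun x => 1 / f x := continuous_const.div hfc hfne
  have hΛfun : Λ = fun x => ∫ t in (0:ℝ)..x, 1 / f t := funext hΛ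
  have hΛd : ∀ x, HasDerivAt Λ (1 / f x) x := by
    intro x
    rw [hΛfun]
    exact intervalIntegral.integral_hasDerivAt_right (hic.intervalIntegrable _ _)
      (hic.stronglyMeasurableAtFilter _ _) hic.continuousAt
  have hΛmono : StrictMono Λ :=
    strictMono_of_deriv_pos (fun x => by
      rw [(hΛd x).deriv]; exact one_div_pos.mpr (hfpos x))
  have hΛsurj : Function.Surjective Λ := fun y => ⟨Linv y, hRinv y⟩
  have hLcont : Continuous Linv := by
    have hLeq : Linv = ⇑(StrictMono.orderIsoOfSurjective Λ hΛmono hΛsurj).symm := by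
      funext y
      apply hΛmono.injective
      rw [hRinv y]
      have := (StrictMono.orderIsoOfSurjective Λ hΛmono hΛsurj).apply_symm_apply y
      rw [StrictMono.coe_orderIsoOfSurjective] at this
      exact this.symm
    rw [hLeq]
    exact OrderIso.continuous _
  have hLd : ∀ y, HasDerivAt Linv (f (Linv y)) y := by
    intro y
    have h := (hΛd (Linv y)).of_local_left_inverse hLcont.continuousAt
      (by simpa using hfne (Linv y)) (Filter.Eventually.of_forall hRinv)
    simpa using h
  have hfd : ∀ y, HasDerivAt f (deriv f y) y :=
    fun y => (hf.differentiable one_ne_zero y).hasDerivAt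
  have hT' : (T : ℝ) ≠ 0 := hT.ne'
  constructor
  · intro x
    rw [hu]
    simp [hLinv x, hfne x]
  · intro t _ x
    -- time derivative
    have hg_t : HasDerivAt (fun s => Linv (Λ x - s)) (f (Linv (Λ x - t)) * -1) t :=
      (hLd (Λ x - t)).comp t ((hasDerivAt_id t).const_sub (Λ x))
    have hfg_t : HasDerivAt (fun s => f (Linv (Λ x - s)))
        (deriv f (Linv (Λ x - t)) * (f (Linv (Λ x - t)) * -1)) t :=
      (hfd (Linv (Λ x - t))).comp t hg_t
    have hexp_t :=
      ((((hg_t.pow 2).sub_const (x ^ 2)).neg.div_const (2 * T)).exp)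
    have hueq : (fun s => u s x) = fun s => (f (Linv (Λ x - s)) / f x) *
        Real.exp (-((Linv (Λ x - s)) ^ 2 - x ^ 2) / (2 * T)) := funext fun s => hu s x
    have hu_t := (hfg_t.div_const (f x)).mul hexp_t
    -- space derivative
    have hfu : (fun y => f y * u t y) =
        fun y => f (Linv (Λ y - t)) *
          Real.exp (-((Linv (Λ y - t)) ^ 2 - y ^ 2) / (2 * T)) := by
      funext y
      rw [hu, div_mul_eq_mul_div, mul_div_assoc']
      exact mul_div_cancel_left₀ _ (hfne y)
    have hg_x : HasDerivAt (fun y => Linv (Λ y - t)) (f (Linv (Λ x - t)) * (1 / f x)) x :=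
      (hLd (Λ x - t)).comp x ((hΛd x).sub_const t)
    have hfg_x : HasDerivAt (fun y => f (Linv (Λ y - t)))
        (deriv f (Linv (Λ x - t)) * (f (Linv (Λ x - t)) * (1 / f x))) x :=
      (hfd (Linv (Λ x - t))).comp x hg_x
    have hexp_x :=
      ((((hg_x.pow 2).sub (hasDerivAt_pow 2 x)).neg.div_const (2 * T)).exp)
    have hv := hfg_x.mul hexp_x
    rw [hueq, hfu, (show HasDerivAt (fun s => f (Linv (Λ x - s)) / f x *
        Real.exp (-(Linv (Λ x - s) ^ 2 - x ^ 2) / (2 * T))) _ t from hu_t).deriv,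
      (show HasDerivAt (fun y => f (Linv (Λ y - t)) *
        Real.exp (-(Linv (Λ y - t) ^ 2 - y ^ 2) / (2 * T))) _ x from hv).deriv, hu]
    simp only [Pi.neg_apply, Pi.sub_apply, Pi.pow_apply]
    field_simp [hfne x, hT']
    ring
end

section
/- Let f : ℝ → ℝ be C¹ with f(x) > ε > 0, f bounded, Λ(x) = ∫₀ˣ 1/f, Λ⁻¹ its inverse, x' ∈ ℝ, and T > 0. Then the function p̃(t,x) := (1/√(2πT))·(f(Λ⁻¹(Λ(x) − t))/f(x))·exp(−(Λ⁻¹(Λ(x) − t) − x')²/(2T)) solves the Liouville equation ∂ₜ p̃(t,x) = −∂ₓ(f(x)·p̃(t,x)) on (0,T] × ℝ with initial condition p̃(0,x) = (1/√(2πT))·exp(−(x − x')²/(2T)). -/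
open MeasureTheory

theorem approx_density_solves_liouville_equation
    (f : ℝ → ℝ) (ε : ℝ) (hε : 0 < ε) (hf : ContDiff ℝ 1 f)
    (hfb : ∃ C, ∀ x, |f x| ≤ C)
    (hfε : ∀ x, ε < f x)
    (Λ Linv : ℝ → ℝ) (hΛ : ∀ x, Λ x = ∫ t in (0:ℝ)..x, 1 / f t)
    (hLinv : Function.LeftInverse Linv Λ) (hRinv : Function.RightInverse Linv Λ)
    (T x' : ℝ) (hT : 0 < T)
    (p : ℝ → ℝ → ℝ)
    (hp : ∀ t x, p t x = (1 / Real.sqrt (2 * Real.pi * T)) *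
        (f (Linv (Λ x - t)) / f x) *
        Real.exp (-(Linv (Λ x - t) - x') ^ 2 / (2 * T))) :
    (∀ x, p 0 x = (1 / Real.sqrt (2 * Real.pi * T)) *
        Real.exp (-(x - x') ^ 2 / (2 * T))) ∧
      ∀ t ∈ Set.Ioc (0:ℝ) T, ∀ x : ℝ,
        deriv (fun s => p s x) t = -(deriv (fun y => f y * p t y) x) := by
  have hfpos : ∀ x, 0 < f x := fun x => hε.trans (hfε x)
  have hfne : ∀ x, f x ≠ 0 := fun x => (hfpos x).ne'
  have hcont : Continuous fun t => 1 / f t :=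
    continuous_const.div hf.continuous fun x => hfne x
  have hΛd : ∀ x, HasDerivAt Λ (1 / f x) x := by
    intro x
    have h : HasDerivAt (fun u => ∫ t in (0:ℝ)..u, 1 / f t) (1 / f x) x :=
      intervalIntegral.integral_hasDerivAt_right
        (hcont.intervalIntegrable _ _)
        (hcont.stronglyMeasurableAtFilter _ _)
        hcont.continuousAt
    have e : Λ = fun u => ∫ t in (0:ℝ)..u, 1 / f t := funext hΛ
    rw [e]; exact h
  have hmono : StrictMono Λ := by
    apply strictMono_of_deriv_pos
    intro x
    rw [(hΛd x).deriv]
    exact one_div_pos.mpr (hfpos x)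
  have hsurj : Function.Surjective Λ := fun y => ⟨Linv y, hRinv y⟩
  have hLc : Continuous Linv := by
    have : Linv = ⇑(StrictMono.orderIsoOfSurjective Λ hmono hsurj).symm := by
      funext y
      apply hLinv.injective
      rw [hRinv y]
      exact ((StrictMono.orderIsoOfSurjective Λ hmono hsurj).apply_symm_apply y).symm
    rw [this]
    exact OrderIso.continuous _
  have hLd : ∀ y, HasDerivAt Linv (f (Linv y)) y := by
    intro y
    have h := HasDerivAt.of_local_left_inverse hLc.continuousAt
      (hΛd (Linv y)) (one_div_ne_zero (hfne _))
      (Filter.Eventually.of_forall hRinv)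
    simpa [one_div] using h
  set c : ℝ := 1 / Real.sqrt (2 * Real.pi * T) with hc
  set F : ℝ → ℝ := fun u => c * (f u * Real.exp (-(u - x') ^ 2 / (2 * T))) with hF
  set F' : ℝ → ℝ := fun u => c * (deriv f u * Real.exp (-(u - x') ^ 2 / (2 * T)) +
      f u * (Real.exp (-(u - x') ^ 2 / (2 * T)) * (-(2 * (u - x')) / (2 * T)))) with hF'
  have hFd : ∀ u, HasDerivAt F (F' u) u := by
    intro u
    have h1 : HasDerivAt (fun u : ℝ => u - x') 1 u := (hasDerivAt_id u).sub_const x'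
    have h2 : HasDerivAt (fun u : ℝ => -(u - x') ^ 2 / (2 * T)) (-(2 * (u - x')) / (2 * T)) u := by
      have := ((h1.fun_pow 2).fun_neg).div_const (2 * T)
      exact this.congr_deriv (by ring)
    have hE : HasDerivAt (fun u : ℝ => Real.exp (-(u - x') ^ 2 / (2 * T)))
        (Real.exp (-(u - x') ^ 2 / (2 * T)) * (-(2 * (u - x')) / (2 * T))) u := h2.exp
    have hfd : HasDerivAt f (deriv f u) u :=
      ((hf.differentiable one_ne_zero) u).hasDerivAt
    exact (hfd.mul hE).const_mul c
  refine ⟨?_, ?_⟩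
  · intro x
    rw [hp 0 x, sub_zero, hLinv x, div_self (hfne x), mul_one]
  · intro t _ x
    set g : ℝ := Linv (Λ x - t) with hg
    -- time derivative
    have ht1 : HasDerivAt (fun s : ℝ => Λ x - s) (-1) t := (hasDerivAt_id t).const_sub (Λ x)
    have ht2 : HasDerivAt (fun s : ℝ => Linv (Λ x - s)) (f g * (-1)) t :=
      (hLd (Λ x - t)).comp t ht1
    have ht3 : HasDerivAt (fun s : ℝ => F (Linv (Λ x - s)) / f x)
        (F' g * (f g * (-1)) / f x) t := ((HasDerivAt.comp (h₂ := F) (h := fun s : ℝ => Linv (Λ x - s)) t (hFd g) ht2)).div_const (f x)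
    have hpt : (fun s : ℝ => p s x) = fun s : ℝ => F (Linv (Λ x - s)) / f x := by
      funext s
      rw [hp s x, hF]
      ring
    -- space derivative
    have hx1 : HasDerivAt (fun y : ℝ => Λ y - t) (1 / f x) x := (hΛd x).sub_const t
    have hx2 : HasDerivAt (fun y : ℝ => Linv (Λ y - t)) (f g * (1 / f x)) x :=
      (hLd (Λ x - t)).comp x hx1
    have hx3 : HasDerivAt (fun y : ℝ => F (Linv (Λ y - t)))
        (F' g * (f g * (1 / f x))) x := HasDerivAt.comp (h₂ := F) (h := fun y : ℝ => Linv (Λ y - t)) x (hFd g) hx2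
    have hpx : (fun y : ℝ => f y * p t y) = fun y : ℝ => F (Linv (Λ y - t)) := by
      funext y
      rw [hp t y, hF]
      field_simp [hfne y]
    rw [hpt, hpx, ht3.deriv, hx3.deriv]
    ring
end
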